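/- Let q > 5 and ν̃ ∈ (−1/2, 1). There exists a constant C_ℳ > 0, depending only on q and ν̃, with the following property. Let ρ > 0, T > 0, U ∈ ℝ³, and let 𝒯 be a real symmetric 3×3 matrix with min{1−ν̃,1+2ν̃}·T·|k|² ≤ kᵀ𝒯k ≤ max{1−ν̃,1+2ν̃}·T·|k|² for all k ∈ ℝ³. Define the ellipsoidal Gaussian M(v) = ρ/√(det(2π𝒯)) · exp(−½(v−U)ᵀ𝒯⁻¹(v−U)) for v ∈ ℝ³. If B > 0 satisfies the three moment bounds ρ ≤ B·T^{3/2}, ρ·(T+|U|²)^{(q−3)/2} ≤ B, and ρ·|U|^{q+3} ≤ B·((T+|U|²)·T)^{3/2}, then sup_{v∈ℝ³} (1+|v|)^q · M(v) ≤ C_ℳ · B. -/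

import Mathlib

noncomputable section

open Real MeasureTheory

/-- Velocity space `ℝ³`. -/
abbrev V3 := Fin 3 → ℝ

/-- Velocity grid index set `ℤ³`. -/
abbrev Idx3 := Fin 3 → ℤ

/-- Euclidean norm on `V3`. -/
def enorm3 (v : V3) : ℝ := Real.sqrt (∑ a, v a ^ 2)

/-- The velocity grid node `v_j = jΔv`. -/
def gridV (Δv : ℝ) (j : Idx3) : V3 := fun a => (j a : ℝ) * Δv

/-- Quadratic form `kᵀ A k` of a 3×3 matrix. -/
def quadForm (A : Matrix (Fin 3) (Fin 3) ℝ) (k : V3) : ℝ := ∑ a, ∑ b, k a * A a b * k b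

/-- The ellipsoidal Gaussian with density `ρ`, bulk velocity `U` and temperature tensor `T`. -/
def gaussianM (ρ : ℝ) (U : V3) (T : Matrix (Fin 3) (Fin 3) ℝ) (v : V3) : ℝ :=
  ρ / Real.sqrt ((2 * π) ^ 3 * T.det) *
    Real.exp (-(1 / 2) * quadForm T⁻¹ (fun a => v a - U a))

/-- Discrete density. -/
def dRho (Δv : ℝ) (h : Idx3 → ℝ) : ℝ := ∑' j : Idx3, h j * Δv ^ 3

/-- Discrete bulk velocity. -/
def dU (Δv : ℝ) (h : Idx3 → ℝ) : V3 :=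
  fun a => (dRho Δv h)⁻¹ * ∑' j : Idx3, h j * gridV Δv j a * Δv ^ 3

/-- Discrete temperature. -/
def dT (Δv : ℝ) (h : Idx3 → ℝ) : ℝ :=
  (3 * dRho Δv h)⁻¹ * ∑' j : Idx3, h j * enorm3 (fun a => gridV Δv j a - dU Δv h a) ^ 2 * Δv ^ 3

/-- Discrete stress tensor. -/
def dTheta (Δv : ℝ) (h : Idx3 → ℝ) : Matrix (Fin 3) (Fin 3) ℝ :=
  Matrix.of fun a b =>
    (dRho Δv h)⁻¹ *
      ∑' j : Idx3, h j * (gridV Δv j a - dU Δv h a) * (gridV Δv j b - dU Δv h b) * Δv ^ 3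

/-- The temperature tensor `(1−ν)T·Id + νΘ`. -/
def tensorOf (ν T : ℝ) (Θ : Matrix (Fin 3) (Fin 3) ℝ) : Matrix (Fin 3) (Fin 3) ℝ :=
  ((1 - ν) * T) • (1 : Matrix (Fin 3) (Fin 3) ℝ) + ν • Θ

/-- Continuous density. -/
def cRho (F : V3 → ℝ) : ℝ := ∫ v : V3, F v

/-- Continuous bulk velocity. -/
def cU (F : V3 → ℝ) : V3 := fun a => (cRho F)⁻¹ * ∫ v : V3, F v * v a

/-- Continuous temperature. -/
def cT (F : V3 → ℝ) : ℝ :=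
  (3 * cRho F)⁻¹ * ∫ v : V3, F v * enorm3 (fun a => v a - cU F a) ^ 2

/-- Continuous stress tensor. -/
def cTheta (F : V3 → ℝ) : Matrix (Fin 3) (Fin 3) ℝ :=
  Matrix.of fun a b => (cRho F)⁻¹ * ∫ v : V3, F v * (v a - cU F a) * (v b - cU F b)

/-- Collision frequency `A_ν = (1−ν)⁻¹`. -/
def Anu (ν : ℝ) : ℝ := (1 - ν)⁻¹

/-- The modified relaxation parameter `nt = κν/(κ+Δt)`. -/
def nuTilde (κ ν Δt : ℝ) : ℝ := κ * ν / (κ + Δt)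

/-- `s(i,j)`: the unique integer with `sΔx ≤ iΔx − Δt v_{j,1} < (s+1)Δx`. -/
def sIdx (Δx Δt Δv : ℝ) (i : ℤ) (j : Idx3) : ℤ :=
  ⌊((i : ℝ) * Δx - Δt * ((j 0 : ℝ) * Δv)) / Δx⌋

/-- Linear reconstruction of a grid function at the foot of the characteristic. -/
def recon (Δx Δt Δv : ℝ) (g : ℤ → Idx3 → ℝ) (i : ℤ) (j : Idx3) : ℝ :=
  (((i : ℝ) * Δx - Δt * ((j 0 : ℝ) * Δv) - (sIdx Δx Δt Δv i j : ℝ) * Δx) / Δx) *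
      g (sIdx Δx Δt Δv i j + 1) j
    + ((((sIdx Δx Δt Δv i j : ℝ) + 1) * Δx - ((i : ℝ) * Δx - Δt * ((j 0 : ℝ) * Δv))) / Δx) *
      g (sIdx Δx Δt Δv i j) j

/-- Discrete ellipsoidal Gaussian built from a velocity grid function `h`. -/
def gaussD (nt Δv : ℝ) (h : Idx3 → ℝ) (j : Idx3) : ℝ :=
  gaussianM (dRho Δv h) (dU Δv h) (tensorOf nt (dT Δv h) (dTheta Δv h)) (gridV Δv j)

/-- The shifted initial datum `v ↦ f₀(x_i − Δt v₁, v)`. -/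
def shift0 (f₀ : ℝ → V3 → ℝ) (Δx Δt : ℝ) (i : ℤ) : V3 → ℝ :=
  fun v => f₀ ((i : ℝ) * Δx - Δt * v 0) v

/-- Step-0 ellipsoidal Gaussian, built from the continuous macroscopic fields of `f̃⁰`. -/
def gauss0 (f₀ : ℝ → V3 → ℝ) (κ ν Δx Δt Δv : ℝ) (i : ℤ) (j : Idx3) : ℝ :=
  gaussianM (cRho (shift0 f₀ Δx Δt i)) (cU (shift0 f₀ Δx Δt i))
    (tensorOf (nuTilde κ ν Δt) (cT (shift0 f₀ Δx Δt i)) (cTheta (shift0 f₀ Δx Δt i)))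
    (gridV Δv j)

/-- `f̃⁰_{i,j} = f₀(x_i − Δt v_{j,1}, v_j)`. -/
def tilde0 (f₀ : ℝ → V3 → ℝ) (Δx Δt Δv : ℝ) (i : ℤ) (j : Idx3) : ℝ :=
  f₀ ((i : ℝ) * Δx - Δt * ((j 0 : ℝ) * Δv)) (gridV Δv j)

/-- The semi-Lagrangian scheme iterates `fⁿ_{i,j}`. -/
def schemeF (f₀ : ℝ → V3 → ℝ) (κ ν Δx Δt Δv : ℝ) : ℕ → ℤ → Idx3 → ℝ
  | 0 => fun i j => f₀ ((i : ℝ) * Δx) (gridV Δv j)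
  | 1 => fun i j =>
      (κ / (κ + Anu ν * Δt)) * tilde0 f₀ Δx Δt Δv i j
        + (Anu ν * Δt / (κ + Anu ν * Δt)) * gauss0 f₀ κ ν Δx Δt Δv i j
  | (n + 2) => fun i j =>
      (κ / (κ + Anu ν * Δt)) * recon Δx Δt Δv (schemeF f₀ κ ν Δx Δt Δv (n + 1)) i j
        + (Anu ν * Δt / (κ + Anu ν * Δt)) *
            gaussD (nuTilde κ ν Δt) Δv (recon Δx Δt Δv (schemeF f₀ κ ν Δx Δt Δv (n + 1)) i) j

/-- The reconstructed scheme iterates `f̃ⁿ_{i,j}`. -/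
def schemeTilde (f₀ : ℝ → V3 → ℝ) (κ ν Δx Δt Δv : ℝ) : ℕ → ℤ → Idx3 → ℝ
  | 0 => tilde0 f₀ Δx Δt Δv
  | (n + 1) => recon Δx Δt Δv (schemeF f₀ κ ν Δx Δt Δv (n + 1))

/-- The ellipsoidal Gaussian used in the `n → n+1` update of the scheme. -/
def schemeGauss (f₀ : ℝ → V3 → ℝ) (κ ν Δx Δt Δv : ℝ) : ℕ → ℤ → Idx3 → ℝ
  | 0 => gauss0 f₀ κ ν Δx Δt Δv
  | (n + 1) => fun i j =>
      gaussD (nuTilde κ ν Δt) Δv (schemeTilde f₀ κ ν Δx Δt Δv (n + 1) i) j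

/-- Discrete density of `f̃ⁿ` at spatial node `i` (continuous fields at step 0). -/
def schemeRho (f₀ : ℝ → V3 → ℝ) (κ ν Δx Δt Δv : ℝ) : ℕ → ℤ → ℝ
  | 0 => fun i => cRho (shift0 f₀ Δx Δt i)
  | (n + 1) => fun i => dRho Δv (schemeTilde f₀ κ ν Δx Δt Δv (n + 1) i)

/-- Discrete bulk velocity of `f̃ⁿ` at spatial node `i` (continuous fields at step 0). -/
def schemeU (f₀ : ℝ → V3 → ℝ) (κ ν Δx Δt Δv : ℝ) : ℕ → ℤ → V3
  | 0 => fun i => cU (shift0 f₀ Δx Δt i)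
  | (n + 1) => fun i => dU Δv (schemeTilde f₀ κ ν Δx Δt Δv (n + 1) i)

/-- Discrete temperature of `f̃ⁿ` at spatial node `i` (continuous fields at step 0). -/
def schemeTemp (f₀ : ℝ → V3 → ℝ) (κ ν Δx Δt Δv : ℝ) : ℕ → ℤ → ℝ
  | 0 => fun i => cT (shift0 f₀ Δx Δt i)
  | (n + 1) => fun i => dT Δv (schemeTilde f₀ κ ν Δx Δt Δv (n + 1) i)

/-- Weighted `L∞_q` norm of the initial datum. -/
def normLq (q : ℝ) (f₀ : ℝ → V3 → ℝ) : ℝ :=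
  ⨆ x : ℝ, ⨆ v : V3, |f₀ x v| * (1 + enorm3 v) ^ q

open Matrix
-- ===== auxiliary lemmas for `gaussian_weighted_bound` =====

abbrev E3' := EuclideanSpace ℝ (Fin 3)

def toE' (k : V3) : E3' := WithLp.toLp 2 k

lemma quadForm_eq_dot' (A : Matrix (Fin 3) (Fin 3) ℝ) (k : V3) :
    quadForm A k = dotProduct k (A.mulVec k) := by
  simp [quadForm, dotProduct, Matrix.mulVec, Finset.mul_sum, mul_assoc]

lemma enorm3_nonneg' (k : V3) : 0 ≤ enorm3 k := Real.sqrt_nonneg _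

lemma enorm3_toE' (k : V3) : enorm3 k = ‖toE' k‖ := by
  rw [EuclideanSpace.norm_eq, enorm3]
  congr 1
  refine Finset.sum_congr rfl fun a _ => ?_
  rw [Real.norm_eq_abs, sq_abs]; rfl

lemma dot_toE' (x y : V3) : dotProduct x y = (inner ℝ (toE' x) (toE' y) : ℝ) := by
  simp [dotProduct, PiLp.inner_apply, RCLike.inner_apply, toE', mul_comm]

lemma enorm3_add_le' (x y : V3) : enorm3 (fun a => x a + y a) ≤ enorm3 x + enorm3 y := by
  rw [enorm3_toE', enorm3_toE' x, enorm3_toE' y]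
  have h : toE' (fun a => x a + y a) = toE' x + toE' y := rfl
  rw [h]
  exact norm_add_le _ _

lemma tensor_bounds' (𝒯 : Matrix (Fin 3) (Fin 3) ℝ) (hsym : 𝒯.IsSymm) {α β : ℝ} (hα : 0 < α)
    (hb : ∀ k : V3, α * enorm3 k ^ 2 ≤ quadForm 𝒯 k ∧ quadForm 𝒯 k ≤ β * enorm3 k ^ 2) :
    α ^ 3 ≤ 𝒯.det ∧ ∀ k : V3, enorm3 k ^ 2 / β ≤ quadForm 𝒯⁻¹ k := by
  have hH : 𝒯.IsHermitian := by
    rwa [Matrix.IsHermitian, Matrix.conjTranspose_eq_transpose_of_trivial]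
  set b := hH.eigenvectorBasis with hbdef
  set lam := hH.eigenvalues with hlamdef
  have hbnorm : ∀ i, ‖toE' (b i : V3)‖ = 1 := fun i => b.orthonormal.1 i
  have h1 : ∀ i, 𝒯 *ᵥ (b i : V3) = lam i • (b i : V3) := fun i => hH.mulVec_eigenvectorBasis i
  have hnorm1 : ∀ i, enorm3 (b i : V3) ^ 2 = 1 := by
    intro i
    rw [enorm3_toE', hbnorm i]; norm_num
  have hqf : ∀ i, quadForm 𝒯 (b i : V3) = lam i := by
    intro i
    rw [quadForm_eq_dot', h1 i, dotProduct_smul, dot_toE',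
      real_inner_self_eq_norm_sq, hbnorm i]
    norm_num
  have hev : ∀ i, α ≤ lam i ∧ lam i ≤ β := by
    intro i
    have h := hb (b i : V3)
    rw [hqf i, hnorm1 i] at h
    constructor <;> nlinarith [h.1, h.2]
  have hlampos : ∀ i, 0 < lam i := fun i => lt_of_lt_of_le hα (hev i).1
  have hβ : 0 < β := lt_of_lt_of_le (hlampos 0) (hev 0).2
  have hdetge : α ^ 3 ≤ 𝒯.det := by
    rw [hH.det_eq_prod_eigenvalues]
    calc α ^ 3 = ∏ _i : Fin 3, α := by simp [Finset.prod_const]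
    _ ≤ ∏ i, lam i := Finset.prod_le_prod (fun _ _ => le_of_lt hα) (fun i _ => (hev i).1)
  refine ⟨hdetge, fun k => ?_⟩
  have hdet0 : IsUnit 𝒯.det := isUnit_iff_ne_zero.mpr (by nlinarith [pow_pos hα 3])
  have hsyminv : (𝒯⁻¹)ᵀ = 𝒯⁻¹ := by rw [Matrix.transpose_nonsing_inv, hsym]
  have hinv_ev : ∀ i, 𝒯⁻¹ *ᵥ (b i : V3) = (lam i)⁻¹ • (b i : V3) := by
    intro i
    have h2 : 𝒯⁻¹ *ᵥ (𝒯 *ᵥ (b i : V3)) = (b i : V3) := by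
      rw [Matrix.mulVec_mulVec, Matrix.nonsing_inv_mul _ hdet0, Matrix.one_mulVec]
    rw [h1 i, Matrix.mulVec_smul] at h2
    calc 𝒯⁻¹ *ᵥ (b i : V3)
        = (lam i)⁻¹ • (lam i • (𝒯⁻¹ *ᵥ (b i : V3))) :=
          (inv_smul_smul₀ (ne_of_gt (hlampos i)) _).symm
      _ = (lam i)⁻¹ • (b i : V3) := by rw [h2]
  set c : Fin 3 → ℝ := fun i => b.repr (toE' k) i with hcdef
  have hrepry : ∀ i, b.repr (toE' (𝒯⁻¹ *ᵥ k)) i = (lam i)⁻¹ * c i := by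
    intro i
    rw [b.repr_apply_apply]
    have e1 : (inner ℝ (b i) (toE' (𝒯⁻¹ *ᵥ k)) : ℝ) = dotProduct (b i : V3) (𝒯⁻¹ *ᵥ k) :=
      (dot_toE' _ _).symm
    have e2 : (inner ℝ (toE' (b i : V3)) (toE' k) : ℝ) = c i := (b.repr_apply_apply (toE' k) i).symm
    rw [e1, Matrix.dotProduct_mulVec, ← Matrix.mulVec_transpose, hsyminv, hinv_ev i,
      smul_dotProduct, dot_toE', e2, smul_eq_mul]
  have hQ : quadForm 𝒯⁻¹ k = ∑ i, (lam i)⁻¹ * c i ^ 2 := by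
    rw [quadForm_eq_dot', dot_toE', ← b.repr.inner_map_map (toE' k) (toE' (𝒯⁻¹ *ᵥ k)),
      PiLp.inner_apply]
    refine Finset.sum_congr rfl fun i _ => ?_
    rw [RCLike.inner_apply, conj_trivial, hrepry i]
    show (lam i)⁻¹ * c i * c i = _
    ring
  have hnk : enorm3 k ^ 2 = ∑ i, c i ^ 2 := by
    rw [enorm3_toE', ← b.repr.norm_map (toE' k), EuclideanSpace.norm_eq,
      Real.sq_sqrt (by positivity)]
    refine Finset.sum_congr rfl fun i _ => ?_
    rw [Real.norm_eq_abs, sq_abs]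
  rw [hQ, hnk, Finset.sum_div]
  refine Finset.sum_le_sum fun i _ => ?_
  have h3 : c i ^ 2 / β ≤ c i ^ 2 / lam i := by
    rw [div_le_div_iff₀ hβ (hlampos i)]
    nlinarith [sq_nonneg (c i), (hev i).2, hlampos i]
  calc c i ^ 2 / β ≤ c i ^ 2 / lam i := h3
    _ = (lam i)⁻¹ * c i ^ 2 := by field_simp

lemma gauss_sup' {q s : ℝ} (hq : 0 ≤ q) (hs : 0 ≤ s) :
    (1 + s) ^ q * Real.exp (-(s ^ 2) / 2) ≤ Real.exp (q ^ 2 / 2) := by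
  have h1 : (1 + s) ^ q ≤ Real.exp (s * q) := by
    rw [Real.exp_mul]
    exact Real.rpow_le_rpow (by linarith) (by linarith [Real.add_one_le_exp s]) hq
  calc (1 + s) ^ q * Real.exp (-(s ^ 2) / 2)
      ≤ Real.exp (s * q) * Real.exp (-(s ^ 2) / 2) := by
        apply mul_le_mul_of_nonneg_right h1 (Real.exp_nonneg _)
    _ = Real.exp (s * q + -(s ^ 2) / 2) := (Real.exp_add _ _).symm
    _ ≤ Real.exp (q ^ 2 / 2) := by
        apply Real.exp_le_exp.2
        nlinarith [sq_nonneg (s - q)]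

set_option maxHeartbeats 1000000 in
/-- weighted `L∞_q` control of the ellipsoidal Gaussian by the moment bounds. -/
theorem gaussian_weighted_bound (q nt : ℝ) (hq : 5 < q) (hnt : nt ∈ Set.Ioo (-(1 / 2) : ℝ) 1) :
    ∃ C > 0, ∀ (ρ T : ℝ) (U : V3) (𝒯 : Matrix (Fin 3) (Fin 3) ℝ),
      0 < ρ → 0 < T → 𝒯.IsSymm →
      (∀ k : V3, min (1 - nt) (1 + 2 * nt) * T * enorm3 k ^ 2 ≤ quadForm 𝒯 k ∧
          quadForm 𝒯 k ≤ max (1 - nt) (1 + 2 * nt) * T * enorm3 k ^ 2) →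
      ∀ B : ℝ, 0 < B →
        ρ ≤ B * T ^ ((3 : ℝ) / 2) →
        ρ * (T + enorm3 U ^ 2) ^ ((q - 3) / 2) ≤ B →
        ρ * enorm3 U ^ (q + 3) ≤ B * ((T + enorm3 U ^ 2) * T) ^ ((3 : ℝ) / 2) →
        ∀ v : V3, (1 + enorm3 v) ^ q * gaussianM ρ U 𝒯 v ≤ C * B := by
  obtain ⟨hnt1, hnt2⟩ := hnt
  set m := min (1 - nt) (1 + 2 * nt) with hmdef
  set Mx := max (1 - nt) (1 + 2 * nt) with hMxdef
  have hm : 0 < m := lt_min (by linarith) (by linarith)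
  have hMx : 0 < Mx := lt_of_lt_of_le hm min_le_max
  have hq0 : 0 ≤ q := by linarith
  have hπm : 0 < 2 * π * m := by
    have := Real.pi_pos; nlinarith
  set Dd : ℝ := (2:ℝ) ^ ((3:ℝ)/2) + (2:ℝ) ^ ((q+3)/2) with hDddef
  have hDd0 : 0 < Dd := by positivity
  set D2 : ℝ := (2*π*m) ^ ((3:ℝ)/2) with hD2def
  have hD2pos : 0 < D2 := Real.rpow_pos_of_pos hπm _
  have hsMx0 : (0:ℝ) < 1 + Real.sqrt Mx := by nlinarith [Real.sqrt_nonneg Mx]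
  have hCpos : 0 < (3:ℝ)^q * (1 + Real.sqrt Mx)^q * Real.exp (q^2/2) * D2⁻¹ * (1 + Dd) := by
    have h1 : (0:ℝ) < (3:ℝ)^q := Real.rpow_pos_of_pos (by norm_num) q
    have h2 : (0:ℝ) < (1 + Real.sqrt Mx)^q := Real.rpow_pos_of_pos hsMx0 q
    have h5 : (0:ℝ) < 1 + Dd := by linarith
    exact mul_pos (mul_pos (mul_pos (mul_pos h1 h2) (Real.exp_pos _)) (inv_pos.2 hD2pos)) h5
  refine ⟨(3:ℝ)^q * (1 + Real.sqrt Mx)^q * Real.exp (q^2/2) * D2⁻¹ * (1 + Dd), hCpos, ?_⟩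
  intro ρ T U 𝒯 hρ hT hsymT hbnd B hB hmom1 hmom2 hmom3 v
  obtain ⟨hdet, hQ⟩ := tensor_bounds' 𝒯 hsymT (mul_pos hm hT) hbnd
  set u := enorm3 U with hudef
  have hu0 : 0 ≤ u := enorm3_nonneg' U
  set S := T + u ^ 2 with hSdef
  have hS : 0 < S := by rw [hSdef]; linarith only [hT, sq_nonneg u]
  set w : V3 := fun a => v a - U a with hw
  set t := enorm3 w with htdef
  have ht0 : 0 ≤ t := enorm3_nonneg' w
  set σ := Real.sqrt S with hσdef
  have hσ : 0 < σ := Real.sqrt_pos.2 hS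
  have huσ : u ≤ σ := by
    rw [hσdef, show u = Real.sqrt (u^2) from (Real.sqrt_sq hu0).symm]
    exact Real.sqrt_le_sqrt (by rw [hSdef]; linarith only [hT])
  have hTσ : Real.sqrt T ≤ σ := Real.sqrt_le_sqrt (by rw [hSdef]; linarith only [sq_nonneg u])
  have hsT : 0 < Real.sqrt T := Real.sqrt_pos.2 hT
  -- gaussian upper bound
  have key1 : D2 * T ^ ((3:ℝ)/2) ≤ Real.sqrt ((2*π)^3 * 𝒯.det) := by
    have e1 : D2 * T ^ ((3:ℝ)/2) = ((2*π*m)*T) ^ ((3:ℝ)/2) :=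
      (Real.mul_rpow (le_of_lt hπm) hT.le).symm
    have e2 : ((2*π*m)*T) ^ ((3:ℝ)/2) = Real.sqrt (((2*π*m)*T)^3) := by
      rw [Real.sqrt_eq_rpow, ← Real.rpow_natCast ((2*π*m)*T) 3,
        ← Real.rpow_mul (by positivity)]
      norm_num
    rw [e1, e2]
    apply Real.sqrt_le_sqrt
    have e3 : ((2*π*m)*T)^3 = (2*π)^3 * (m*T)^3 := by ring
    rw [e3]
    have hpi3 : (0:ℝ) ≤ (2*π)^3 := by positivity
    exact mul_le_mul_of_nonneg_left hdet hpi3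
  have hQw := hQ w
  rw [← htdef] at hQw
  have hexp : Real.exp (-(1/2) * quadForm 𝒯⁻¹ w) ≤ Real.exp (-(t^2/(Mx*T))/2) := by
    apply Real.exp_le_exp.2
    linarith only [hQw]
  have hgM0 : 0 ≤ gaussianM ρ U 𝒯 v := by
    unfold gaussianM
    exact mul_nonneg (div_nonneg hρ.le (Real.sqrt_nonneg _)) (Real.exp_nonneg _)
  have hMle : gaussianM ρ U 𝒯 v
      ≤ ρ / (D2 * T ^ ((3:ℝ)/2)) * Real.exp (-(t^2/(Mx*T))/2) := by
    unfold gaussianM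
    rw [← hw]
    apply mul_le_mul _ hexp (Real.exp_nonneg _)
      (div_nonneg hρ.le (mul_pos hD2pos (Real.rpow_pos_of_pos hT _)).le)
    exact div_le_div_of_nonneg_left hρ.le
      (mul_pos hD2pos (Real.rpow_pos_of_pos hT _)) key1
  -- weight estimates
  have henv : enorm3 v ≤ u + t := by
    have e : v = fun a => U a + w a := by funext a; simp [hw]
    calc enorm3 v = enorm3 (fun a => U a + w a) := by rw [← e]
      _ ≤ enorm3 U + enorm3 w := enorm3_add_le' U w
      _ = u + t := rfl
  have hdivσ : (0:ℝ) ≤ t / σ := div_nonneg ht0 hσ.le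
  have hst : σ * (t / σ) = t := mul_div_cancel₀ t (ne_of_gt hσ)
  have hweight : (1 + enorm3 v) ≤ (1 + 2*σ) * (1 + t/σ) := by
    have expand : (1 + 2*σ) * (1 + t/σ) = 1 + t/σ + 2*σ + 2*(σ*(t/σ)) := by ring
    rw [expand, hst]
    linarith only [henv, huσ, hdivσ, hσ.le, ht0]
  have hWq : (1 + enorm3 v) ^ q ≤ (1 + 2*σ)^q * (1 + t/σ)^q := by
    rw [← Real.mul_rpow (by linarith only [hσ.le]) (by linarith only [hdivσ])]
    exact Real.rpow_le_rpow (by linarith only [enorm3_nonneg' v]) hweight hq0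
  set s := t / Real.sqrt (Mx*T) with hsdef
  have hsqMT : 0 < Real.sqrt (Mx*T) := Real.sqrt_pos.2 (mul_pos hMx hT)
  have hs0 : 0 ≤ s := div_nonneg ht0 hsqMT.le
  have hts : t/σ ≤ Real.sqrt Mx * s := by
    have e : Real.sqrt Mx * s = t / Real.sqrt T := by
      rw [hsdef, Real.sqrt_mul hMx.le]
      field_simp
    rw [e]
    exact div_le_div_of_nonneg_left ht0 hsT hTσ
  have hmid1 : 1 + t/σ ≤ (1 + Real.sqrt Mx) * (1 + s) := by
    have expand2 : (1 + Real.sqrt Mx) * (1 + s) = 1 + s + Real.sqrt Mx + Real.sqrt Mx * s := by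
      ring
    rw [expand2]
    linarith only [hts, hs0, Real.sqrt_nonneg Mx]
  have hexp_s : Real.exp (-(t^2/(Mx*T))/2) = Real.exp (-(s^2)/2) := by
    congr 1
    rw [hsdef, div_pow, Real.sq_sqrt (mul_pos hMx hT).le]
  have hmid : (1 + t/σ)^q * Real.exp (-(t^2/(Mx*T))/2)
      ≤ (1 + Real.sqrt Mx)^q * Real.exp (q^2/2) := by
    rw [hexp_s]
    calc (1 + t/σ)^q * Real.exp (-(s^2)/2)
        ≤ ((1 + Real.sqrt Mx)*(1+s))^q * Real.exp (-(s^2)/2) := by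
          apply mul_le_mul_of_nonneg_right _ (Real.exp_nonneg _)
          exact Real.rpow_le_rpow (by linarith only [hdivσ]) hmid1 hq0
      _ = (1 + Real.sqrt Mx)^q * ((1+s)^q * Real.exp (-(s^2)/2)) := by
          rw [Real.mul_rpow hsMx0.le (by linarith only [hs0])]; ring
      _ ≤ (1 + Real.sqrt Mx)^q * Real.exp (q^2/2) := by
          apply mul_le_mul_of_nonneg_left (gauss_sup' hq0 hs0)
            (Real.rpow_nonneg hsMx0.le q)
  have hσq : σ ^ q = S ^ (q/2) := by
    rw [hσdef, Real.sqrt_eq_rpow, ← Real.rpow_mul hS.le]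
    congr 1; ring
  have hSq20 : (0:ℝ) ≤ S ^ (q/2) := Real.rpow_nonneg hS.le _
  have h3q : (0:ℝ) ≤ (3:ℝ)^q := Real.rpow_nonneg (by norm_num) q
  have hw3 : (1 + 2*σ)^q ≤ (3:ℝ)^q * (1 + S^(q/2)) := by
    rcases le_total σ 1 with hσ1 | hσ1
    · calc (1 + 2*σ)^q ≤ (3:ℝ)^q := by
              exact Real.rpow_le_rpow (by linarith only [hσ.le]) (by linarith only [hσ1]) hq0
        _ = (3:ℝ)^q * 1 := (mul_one _).symm
        _ ≤ (3:ℝ)^q * (1 + S^(q/2)) :=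
          mul_le_mul_of_nonneg_left (by linarith only [hSq20]) h3q
    · calc (1 + 2*σ)^q ≤ (3*σ)^q := by
              exact Real.rpow_le_rpow (by linarith only [hσ.le]) (by linarith only [hσ1]) hq0
        _ = (3:ℝ)^q * σ^q := Real.mul_rpow (by norm_num) hσ.le
        _ = (3:ℝ)^q * S^(q/2) := by rw [hσq]
        _ ≤ (3:ℝ)^q * (1 + S^(q/2)) :=
          mul_le_mul_of_nonneg_left (by linarith only [hSq20]) h3q
  -- the moment estimate
  have hUS : ρ * S ^ (q/2) ≤ Dd * (B * T ^ ((3:ℝ)/2)) := by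
    have hT32 : (0:ℝ) ≤ T ^ ((3:ℝ)/2) := Real.rpow_nonneg hT.le _
    rcases le_or_gt (u^2) T with hcase | hcase
    · have hS2T : S ≤ 2 * T := by rw [hSdef]; linarith only [hcase]
      have hsplit : S ^ (q/2) = S ^ ((3:ℝ)/2) * S ^ ((q-3)/2) := by
        rw [← Real.rpow_add hS]; congr 1; ring
      have hS32 : S ^ ((3:ℝ)/2) ≤ (2:ℝ) ^ ((3:ℝ)/2) * T ^ ((3:ℝ)/2) := by
        rw [← Real.mul_rpow (by norm_num) hT.le]
        exact Real.rpow_le_rpow hS.le hS2T (by norm_num)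
      have e : ρ * S ^ (q/2) = (ρ * S ^ ((q-3)/2)) * S ^ ((3:ℝ)/2) := by
        rw [hsplit]; ring
      rw [e]
      calc (ρ * S ^ ((q-3)/2)) * S ^ ((3:ℝ)/2)
          ≤ B * ((2:ℝ) ^ ((3:ℝ)/2) * T ^ ((3:ℝ)/2)) :=
            mul_le_mul hmom2 hS32 (Real.rpow_nonneg hS.le _) hB.le
        _ ≤ Dd * (B * T ^ ((3:ℝ)/2)) := by
            rw [hDddef]
            have h23 : (0:ℝ) ≤ (2:ℝ) ^ ((q+3)/2) := Real.rpow_nonneg (by norm_num) _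
            have h24 : (0:ℝ) ≤ (2:ℝ) ^ ((q+3)/2) * (B * T ^ ((3:ℝ)/2)) :=
              mul_nonneg h23 (mul_nonneg hB.le hT32)
            linarith only [h24]
    · have hupos : 0 < u := by
        rcases hu0.lt_or_eq with h | h
        · exact h
        · exfalso
          rw [← h] at hcase
          norm_num at hcase
          linarith only [hT, hcase]
      have hS2u : S ≤ 2 * u^2 := by rw [hSdef]; linarith only [hcase.le]
      have hu2q : ((u:ℝ)^2) ^ ((q:ℝ)/2) = u ^ q := by
        rw [← Real.rpow_natCast u 2, ← Real.rpow_mul hu0]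
        congr 1
        push_cast
        ring
      have hu23 : ((u:ℝ)^2) ^ ((3:ℝ)/2) = u ^ (3:ℝ) := by
        rw [← Real.rpow_natCast u 2, ← Real.rpow_mul hu0]
        congr 1
        push_cast
        ring
      have hSq2 : S ^ (q/2) ≤ (2:ℝ)^(q/2) * u ^ q := by
        calc S^(q/2) ≤ (2*u^2)^(q/2) := Real.rpow_le_rpow hS.le hS2u (by positivity)
          _ = (2:ℝ)^(q/2) * ((u^2:ℝ))^(q/2) := Real.mul_rpow (by norm_num) (by positivity)
          _ = (2:ℝ)^(q/2) * u^q := by rw [hu2q]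
      have hS32u : S ^ ((3:ℝ)/2) ≤ (2:ℝ) ^ ((3:ℝ)/2) * u ^ (3:ℝ) := by
        calc S^((3:ℝ)/2) ≤ (2*u^2)^((3:ℝ)/2) :=
              Real.rpow_le_rpow hS.le hS2u (by norm_num)
          _ = (2:ℝ)^((3:ℝ)/2) * ((u^2:ℝ))^((3:ℝ)/2) := Real.mul_rpow (by norm_num) (by positivity)
          _ = (2:ℝ)^((3:ℝ)/2) * u^(3:ℝ) := by rw [hu23]
      have hsplitu : u ^ (q+3) = u ^ q * u ^ (3:ℝ) := by
        rw [← Real.rpow_add hupos]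
      have hST : ((S*T:ℝ))^((3:ℝ)/2) = S^((3:ℝ)/2) * T^((3:ℝ)/2) := Real.mul_rpow hS.le hT.le
      have hkey : ρ * u ^ q * u^(3:ℝ) ≤ ((2:ℝ)^((3:ℝ)/2) * B * T^((3:ℝ)/2)) * u^(3:ℝ) := by
        calc ρ * u^q * u^(3:ℝ) = ρ * u^(q+3) := by rw [hsplitu]; ring
          _ ≤ B * ((S*T:ℝ))^((3:ℝ)/2) := hmom3
          _ = B * S^((3:ℝ)/2) * T^((3:ℝ)/2) := by rw [hST]; ring
          _ ≤ B * ((2:ℝ)^((3:ℝ)/2) * u^(3:ℝ)) * T^((3:ℝ)/2) := by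
              apply mul_le_mul_of_nonneg_right
                (mul_le_mul_of_nonneg_left hS32u hB.le) hT32
          _ = ((2:ℝ)^((3:ℝ)/2) * B * T^((3:ℝ)/2)) * u^(3:ℝ) := by ring
      have hρuq : ρ * u^q ≤ (2:ℝ)^((3:ℝ)/2) * B * T^((3:ℝ)/2) :=
        le_of_mul_le_mul_right hkey (Real.rpow_pos_of_pos hupos _)
      calc ρ * S ^ (q/2) ≤ ρ * ((2:ℝ)^(q/2) * u^q) :=
            mul_le_mul_of_nonneg_left hSq2 hρ.le
        _ = (2:ℝ)^(q/2) * (ρ * u^q) := by ring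
        _ ≤ (2:ℝ)^(q/2) * ((2:ℝ)^((3:ℝ)/2) * B * T^((3:ℝ)/2)) :=
            mul_le_mul_of_nonneg_left hρuq (Real.rpow_nonneg (by norm_num) _)
        _ = ((2:ℝ)^(q/2) * (2:ℝ)^((3:ℝ)/2)) * (B * T^((3:ℝ)/2)) := by ring
        _ = (2:ℝ)^((q+3)/2) * (B * T^((3:ℝ)/2)) := by
            rw [← Real.rpow_add (by norm_num : (0:ℝ) < 2)]
            congr 1; ring
        _ ≤ Dd * (B * T^((3:ℝ)/2)) := by
            rw [hDddef]
            have h23 : (0:ℝ) ≤ (2:ℝ) ^ ((3:ℝ)/2) := Real.rpow_nonneg (by norm_num) _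
            have h24 : (0:ℝ) ≤ (2:ℝ) ^ ((3:ℝ)/2) * (B * T ^ ((3:ℝ)/2)) :=
              mul_nonneg h23 (mul_nonneg hB.le hT32)
            linarith only [h24]
  have hfinal : ρ * (1 + S^(q/2)) ≤ (1 + Dd) * (B * T ^ ((3:ℝ)/2)) := by
    have e : ρ * (1 + S^(q/2)) = ρ + ρ * S^(q/2) := by ring
    rw [e]
    linarith only [hmom1, hUS]
  -- assembly
  have hT32pos : (0:ℝ) < T ^ ((3:ℝ)/2) := Real.rpow_pos_of_pos hT _
  have hG1 : (0:ℝ) ≤ (1 + Real.sqrt Mx)^q * Real.exp (q^2/2) :=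
    mul_nonneg (Real.rpow_nonneg hsMx0.le q) (Real.exp_nonneg _)
  have h2σ0 : (0:ℝ) ≤ (1 + 2*σ)^q := Real.rpow_nonneg (by linarith only [hσ.le]) q
  have hdiv0 : (0:ℝ) ≤ ρ / (D2 * T ^ ((3:ℝ)/2)) :=
    div_nonneg hρ.le (mul_pos hD2pos hT32pos).le
  calc (1 + enorm3 v)^q * gaussianM ρ U 𝒯 v
      ≤ ((1 + 2*σ)^q * (1 + t/σ)^q) *
          (ρ / (D2 * T ^ ((3:ℝ)/2)) * Real.exp (-(t^2/(Mx*T))/2)) := by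
        apply mul_le_mul hWq hMle hgM0
          (mul_nonneg h2σ0 (Real.rpow_nonneg (by linarith only [hdivσ]) q))
    _ = ((1 + 2*σ)^q * (ρ / (D2 * T ^ ((3:ℝ)/2)))) *
          ((1 + t/σ)^q * Real.exp (-(t^2/(Mx*T))/2)) := by ring
    _ ≤ ((1 + 2*σ)^q * (ρ / (D2 * T ^ ((3:ℝ)/2)))) *
          ((1 + Real.sqrt Mx)^q * Real.exp (q^2/2)) :=
        mul_le_mul_of_nonneg_left hmid (mul_nonneg h2σ0 hdiv0)
    _ = (1 + 2*σ)^q * ((1 + Real.sqrt Mx)^q * Real.exp (q^2/2)) *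
          (ρ / (D2 * T ^ ((3:ℝ)/2))) := by ring
    _ ≤ ((3:ℝ)^q * (1 + S^(q/2))) * ((1 + Real.sqrt Mx)^q * Real.exp (q^2/2)) *
          (ρ / (D2 * T ^ ((3:ℝ)/2))) :=
        mul_le_mul_of_nonneg_right (mul_le_mul_of_nonneg_right hw3 hG1) hdiv0
    _ = (3:ℝ)^q * (1 + Real.sqrt Mx)^q * Real.exp (q^2/2) *
          (ρ * (1 + S^(q/2)) / (D2 * T ^ ((3:ℝ)/2))) := by ring
    _ ≤ (3:ℝ)^q * (1 + Real.sqrt Mx)^q * Real.exp (q^2/2) *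
          ((1 + Dd) * (B * T ^ ((3:ℝ)/2)) / (D2 * T ^ ((3:ℝ)/2))) := by
        apply mul_le_mul_of_nonneg_left _
          (mul_nonneg (mul_nonneg h3q (Real.rpow_nonneg hsMx0.le q)) (Real.exp_nonneg _))
        exact (div_le_div_iff_of_pos_right (mul_pos hD2pos hT32pos)).2 hfinal
    _ = (3:ℝ)^q * (1 + Real.sqrt Mx)^q * Real.exp (q^2/2) * D2⁻¹ * (1 + Dd) * B := by
        field_simp


end
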